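/- filterACS completeness: Let G = (V,E) be a valid policy and E_σ = filterACS G M E (the greedy ACS filter run over all edges of E). Then for every nonempty X ⊆ E \ (E_σ ∪ backflows(E)), the compliance criterion fails: ¬ (⋃ get_offending_flows (getACS M) (α (V, E, E_σ ∪ X)) ⊆ backflows(E_σ ∪ X) \ E). -/

import Mathlib

def backflows {α : Type*} (X : Set (α × α)) : Set (α × α) :=
  {e | (e.2, e.1) ∈ X}

def offending_flows {α : Type*} (m : Set α → Set (α × α) → Prop)
    (V : Set α) (E : Set (α × α)) : Set (Set (α × α)) :=
  {F | F ⊆ E ∧ ¬ m V E ∧ m V (E \ F) ∧ ∀ e ∈ F, ¬ m V ((E \ F) ∪ {e})}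

def get_offending_flows {α : Type*} (M : Set (Set α → Set (α × α) → Prop))
    (V : Set α) (E : Set (α × α)) : Set (Set (α × α)) :=
  ⋃ m ∈ M, offending_flows m V E

inductive Strategy : Type
  | IFS : Strategy
  | ACS : Strategy

structure SecurityInvariant (α : Type*) where
  pred : Set α → Set (α × α) → Prop
  strat : Strategy

/-- the predicates of the IFS-tagged invariants -/
def getIFS {α : Type*} (M : Set (SecurityInvariant α)) :
    Set (Set α → Set (α × α) → Prop) :=
  {f | ∃ m ∈ M, m.strat = Strategy.IFS ∧ f = m.pred}

/-- the predicates of the ACS-tagged invariants -/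
def getACS {α : Type*} (M : Set (SecurityInvariant α)) :
    Set (Set α → Set (α × α) → Prop) :=
  {f | ∃ m ∈ M, m.strat = Strategy.ACS ∧ f = m.pred}

open Classical in
/-- greedy IFS filter; list accumulators are read as sets via `{x | x ∈ ·}` -/
noncomputable def filterIFS {α : Type*} (V : Set α) (E : Set (α × α))
    (M : Set (SecurityInvariant α)) :
    List (α × α) → List (α × α) → List (α × α)
  | a, [] => a
  | a, e :: es =>
    if ∀ m ∈ getIFS M,
        m V (E ∪ {x | x ∈ e :: a} ∪ backflows {x | x ∈ e :: a})
    then filterIFS V E M (e :: a) es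
    else filterIFS V E M a es

open Classical in
/-- greedy ACS filter -/
noncomputable def filterACS {α : Type*} (V : Set α) (E : Set (α × α))
    (M : Set (SecurityInvariant α)) :
    List (α × α) → List (α × α) → List (α × α)
  | a, [] => a
  | a, e :: es =>
    if e ∉ backflows E ∧
        ∀ F ∈ get_offending_flows (getACS M) V
            (E ∪ {x | x ∈ e :: a} ∪ backflows {x | x ∈ e :: a}),
          F ⊆ backflows {x | x ∈ e :: a}
    then filterACS V E M (e :: a) es
    else filterACS V E M a es
lemma filterACS_sub {α : Type*} (V : Set α) (E : Set (α × α))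
    (M : Set (SecurityInvariant α)) :
    ∀ (es a : List (α × α)), {x | x ∈ a} ⊆ {x | x ∈ filterACS V E M a es} := by
  intro es
  induction es with
  | nil => intro a; simp [filterACS]
  | cons e es ih =>
    intro a
    rw [filterACS]
    split
    · exact fun y hy => ih (e :: a) (by simp at hy ⊢; tauto)
    · exact ih a

lemma filterACS_reject {α : Type*} (V : Set α) (E : Set (α × α))
    (M : Set (SecurityInvariant α)) :
    ∀ (es a : List (α × α)) (e : α × α), e ∈ es →
      e ∉ {x | x ∈ filterACS V E M a es} →
      ∃ a' : List (α × α),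
        {x | x ∈ a'} ⊆ {x | x ∈ filterACS V E M a es} ∧
        {x | x ∈ a'} ⊆ {x | x ∈ a} ∪ {x | x ∈ es} ∧
        ¬ (e ∉ backflows E ∧
            ∀ F ∈ get_offending_flows (getACS M) V
                (E ∪ {x | x ∈ e :: a'} ∪ backflows {x | x ∈ e :: a'}),
              F ⊆ backflows {x | x ∈ e :: a'}) := by
  intro es
  induction es with
  | nil => intro a e he; simp at he
  | cons e' es ih =>
    intro a e he hnot
    rw [filterACS] at hnot ⊢
    split at hnot
    · rename_i hcond
      rw [if_pos hcond]
      rcases List.mem_cons.mp he with rfl | he'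
      · exact absurd (filterACS_sub V E M es (e :: a) (by simp)) hnot
      · obtain ⟨a', h1, h2, h3⟩ := ih (e' :: a) e he' hnot
        refine ⟨a', ?_, ?_, h3⟩
        · simpa using h1
        · intro y hy
          have := h2 hy
          simp at this ⊢; tauto
    · rename_i hcond
      rw [if_neg hcond]
      rcases List.mem_cons.mp he with rfl | he'
      · refine ⟨a, filterACS_sub V E M es a, fun y hy => Or.inl hy, hcond⟩
      · obtain ⟨a', h1, h2, h3⟩ := ih a e he' hnot
        refine ⟨a', h1, ?_, h3⟩
        intro y hy
        have := h2 hy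
        simp at this ⊢; tauto

lemma shrink_offending {α : Type*} (m : Set α → Set (α × α) → Prop) (V : Set α)
    (C : Set (α × α)) (hC : ¬ m V C)
    (hmono : ∀ E₁ E₂ : Set (α × α), m V E₁ → E₂ ⊆ E₁ → m V E₂)
    (x : α × α) (B : Set (α × α)) (hnB : ¬ m V B) :
    ∀ (n : ℕ) (G : Set (α × α)), G.Finite → G.ncard ≤ n → G ⊆ C → x ∈ G →
      B \ {x} ⊆ C \ G → m V (C \ G) →
      ∃ F ∈ offending_flows m V C, x ∈ F := by
  intro n
  induction n with
  | zero =>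
    intro G hfin hcard _ hx _ _
    have : G.ncard = 0 := Nat.le_zero.mp hcard
    rw [Set.ncard_eq_zero hfin] at this
    simp [this] at hx
  | succ n ih =>
    intro G hfin hcard hsub hx hB hm
    by_cases hmin : ∀ f ∈ G, ¬ m V ((C \ G) ∪ {f})
    · exact ⟨G, ⟨hsub, hC, hm, hmin⟩, hx⟩
    · push_neg at hmin
      obtain ⟨f, hfG, hmf⟩ := hmin
      have hfx : f ≠ x := by
        rintro rfl
        apply hnB
        apply hmono _ _ hmf
        intro y hy
        by_cases hyf : y = f
        · simp [hyf]
        · exact Or.inl (hB ⟨hy, hyf⟩)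
      have hCG : C \ (G \ {f}) = (C \ G) ∪ {f} := by
        have hfC : f ∈ C := hsub hfG
        ext y
        simp only [Set.mem_diff, Set.mem_union, Set.mem_singleton_iff]
        constructor
        · rintro ⟨hyC, hy⟩
          by_cases hyf : y = f
          · exact Or.inr hyf
          · exact Or.inl ⟨hyC, fun h => hy ⟨h, hyf⟩⟩
        · rintro (⟨hyC, hy⟩ | rfl)
          · exact ⟨hyC, fun h => hy h.1⟩
          · exact ⟨hfC, fun h => h.2 rfl⟩
      apply ih (G \ {f}) (hfin.subset Set.diff_subset)
      · have : (G \ {f}).ncard < G.ncard := by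
          apply Set.ncard_lt_ncard _ hfin
          constructor
          · exact Set.diff_subset
          · intro h
            exact (h hfG).2 rfl
        omega
      · exact Set.diff_subset.trans hsub
      · exact ⟨hx, fun h => hfx h.symm⟩
      · rw [hCG]; exact fun y hy => Or.inl (hB hy)
      · rw [hCG]; exact hmf

lemma backflows_finite {α : Type*} {S : Set (α × α)} (h : S.Finite) :
    (backflows S).Finite := by
  have : backflows S = Prod.swap '' S := by
    ext ⟨a, b⟩
    simp [backflows, Prod.swap, Prod.ext_iff]
  rw [this]
  exact h.image _

lemma backflows_mono {α : Type*} {S T : Set (α × α)} (h : S ⊆ T) :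
    backflows S ⊆ backflows T := fun e he => h he

theorem stmt_13 {α : Type*} (M : Set (SecurityInvariant α))
    (V : Set α) (E : Set (α × α)) (L : List (α × α))
    (h_empty : ∀ m ∈ M, ∀ V' : Set α, m.pred V' ∅)
    (h_mono : ∀ m ∈ M, ∀ (V' : Set α) (E₁ E₂ : Set (α × α)),
        m.pred V' E₁ → E₂ ⊆ E₁ → m.pred V' E₂)
    (h_valid : ∀ m ∈ M, m.pred V E)
    (hL : {x | x ∈ L} = E) :
    ∀ X ⊆ E \ ({x | x ∈ filterACS V E M [] L} ∪ backflows E), X ≠ ∅ →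
      ¬ (⋃₀ get_offending_flows (getACS M) V
            (E ∪ ({x | x ∈ filterACS V E M [] L} ∪ X) ∪
              backflows ({x | x ∈ filterACS V E M [] L} ∪ X)) ⊆
          backflows ({x | x ∈ filterACS V E M [] L} ∪ X) \ E) := by
  intro X hX hXne hcomp
  set R := filterACS V E M [] L with hR
  set Eσ : Set (α × α) := {x | x ∈ R} with hEσ
  -- pick an element of X
  obtain ⟨e, heX⟩ := Set.nonempty_iff_ne_empty.mpr hXne
  have heE : e ∈ E := (hX heX).1
  have heEσ : e ∉ Eσ := fun h => (hX heX).2 (Or.inl h)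
  have hebf : e ∉ backflows E := fun h => (hX heX).2 (Or.inr h)
  have heL : e ∈ L := by rw [← hL] at heE; exact heE
  obtain ⟨a', ha'R, ha'E, hrej⟩ := filterACS_reject V E M L [] e heL heEσ
  have ha'E' : {x | x ∈ a'} ⊆ E := by
    intro y hy
    rcases ha'E hy with h | h
    · simp at h
    · rw [← hL]; exact h
  push_neg at hrej
  obtain ⟨F, hF, hFnot⟩ := hrej hebf
  simp only [get_offending_flows, Set.mem_iUnion] at hF
  obtain ⟨m, hmACS, hFoff⟩ := hF
  obtain ⟨m₀, hm₀M, hm₀ACS, rfl⟩ := hmACS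
  set E1 : Set (α × α) :=
    E ∪ {x | x ∈ e :: a'} ∪ backflows {x | x ∈ e :: a'} with hE1
  obtain ⟨hFsub, hFne, hFrem, hFmin⟩ := hFoff
  obtain ⟨x, hxF, hxbf⟩ := Set.not_subset.mp hFnot
  have hxE : x ∈ E := by
    rcases hFsub hxF with h | h
    · rcases h with h | h
      · exact h
      · simp only [Set.mem_setOf_eq, List.mem_cons] at h
        rcases h with rfl | h
        · exact heE
        · exact ha'E' h
    · exact absurd h hxbf
  set Etot : Set (α × α) := E ∪ (Eσ ∪ X) ∪ backflows (Eσ ∪ X) with hEtot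
  have hmono' : ∀ E₁ E₂ : Set (α × α), m₀.pred V E₁ → E₂ ⊆ E₁ → m₀.pred V E₂ :=
    h_mono m₀ hm₀M V
  have hea' : {x | x ∈ e :: a'} ⊆ Eσ ∪ X := by
    intro y hy
    simp only [Set.mem_setOf_eq, List.mem_cons] at hy
    rcases hy with rfl | hy
    · exact Or.inr heX
    · exact Or.inl (ha'R hy)
  have hE1tot : E1 ⊆ Etot := by
    intro y hy
    rcases hy with h | h
    · rcases h with h | h
      · exact Or.inl (Or.inl h)
      · exact Or.inl (Or.inr (hea' h))
    · exact Or.inr (backflows_mono hea' h)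
  set B : Set (α × α) := (E1 \ F) ∪ {x} with hB
  have hBsub : B ⊆ Etot := by
    intro y hy
    rcases hy with h | h
    · exact hE1tot h.1
    · simp only [Set.mem_singleton_iff] at h
      exact hE1tot (hFsub (h ▸ hxF))
  have hnB : ¬ m₀.pred V B := hFmin x hxF
  have hnEtot : ¬ m₀.pred V Etot := fun h => hnB (hmono' _ _ h hBsub)
  have hBx : m₀.pred V (B \ {x}) := by
    apply hmono' _ _ hFrem
    intro y hy
    rcases hy.1 with h | h
    · exact h
    · exact absurd h hy.2
  -- finiteness
  have hEfin : E.Finite := by rw [← hL]; exact L.finite_toSet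
  have hEtotfin : Etot.Finite := by
    apply Set.Finite.union
    · exact Set.Finite.union hEfin
        (Set.Finite.union (R.finite_toSet) (hEfin.subset fun y hy => (hX hy).1))
    · exact backflows_finite
        (Set.Finite.union (R.finite_toSet) (hEfin.subset fun y hy => (hX hy).1))
  set G : Set (α × α) := Etot \ (B \ {x}) with hG
  have hEtotG : Etot \ G = B \ {x} := by
    rw [hG, Set.diff_diff_right_self]
    exact Set.inter_eq_self_of_subset_right
      ((Set.diff_subset).trans hBsub)
  obtain ⟨F', hF'off, hxF'⟩ :=
    shrink_offending m₀.pred V Etot hnEtot hmono' x B hnB G.ncard G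
      (hEtotfin.subset Set.diff_subset) le_rfl Set.diff_subset
      ⟨hBsub (Or.inr rfl), fun h => h.2 rfl⟩
      (by rw [hEtotG]) (by rw [hEtotG]; exact hBx)
  have : x ∈ ⋃₀ get_offending_flows (getACS M) V Etot := by
    refine ⟨F', ?_, hxF'⟩
    simp only [get_offending_flows, Set.mem_iUnion]
    exact ⟨m₀.pred, ⟨m₀, hm₀M, hm₀ACS, rfl⟩, hF'off⟩
  exact (hcomp this).2 hxE
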